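/- Let μ > 0 and let ψ : [0, ∞) → ℓ² be a solution of the AL lattice. Then the deformed power is conserved: P_μ(ψ(t)) = P_μ(ψ(0)) for every t ≥ 0. -/

import Mathlib

set_option maxHeartbeats 1000000


open Set

noncomputable section

/-- The Hilbert space ℓ² of square-summable sequences of complex numbers indexed by ℤ. -/
abbrev l2 : Type := lp (fun _ : ℤ => ℂ) 2

/-- `ψ : I → ℓ²` is a solution of the Ablowitz–Ladik lattice
`i ψ̇ₙ + (ψₙ₊₁ + ψₙ₋₁) + μ|ψₙ|²(ψₙ₊₁ + ψₙ₋₁) = 0` on the set `s`, with derivative curve `ψ'`: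
it is continuously differentiable and satisfies the equation componentwise. -/
def IsALSol (μ : ℝ) (s : Set ℝ) (ψ ψ' : ℝ → l2) : Prop :=
  (∀ t ∈ s, HasDerivWithinAt ψ (ψ' t) s t) ∧ ContinuousOn ψ' s ∧
    ∀ t ∈ s, ∀ n : ℤ,
      Complex.I * (ψ' t) n + ((ψ t) (n + 1) + (ψ t) (n - 1))
        + (μ * ‖(ψ t) n‖ ^ 2 : ℝ) * ((ψ t) (n + 1) + (ψ t) (n - 1)) = 0

/-- The deformed power `P_μ(ψ) = Σₙ ln(1 + μ|ψₙ|²)`. -/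
def Pdef (μ : ℝ) (ψ : l2) : ℝ := ∑' n : ℤ, Real.log (1 + μ * ‖ψ n‖ ^ 2)

/-- Evaluation at a coordinate as a continuous `ℝ`-linear map on `ℓ²`. -/
def evalCLM (n : ℤ) : l2 →L[ℝ] ℂ :=
  LinearMap.mkContinuous
    { toFun := fun f => f n
      map_add' := fun f g => congrFun (lp.coeFn_add f g) n
      map_smul' := fun r f => congrFun (lp.coeFn_smul r f) n }
    1 (fun f => by simpa using lp.norm_apply_le_norm (by norm_num) f n)

/-- Telescoping sum over `Finset.Icc (-N) N` in `ℤ`. -/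
lemma telescope_sum (c : ℤ → ℝ) (N : ℕ) :
    ∑ n ∈ Finset.Icc (-(N:ℤ)) (N:ℤ), (c n - c (n-1)) = c N - c (-(N:ℤ)-1) := by
  induction N with
  | zero => norm_num
  | succ N ih =>
      have h1 : Finset.Icc (-((N+1:ℕ)):ℤ) ((N+1:ℕ):ℤ)
          = insert (-((N+1:ℕ)):ℤ) (insert ((N+1:ℕ):ℤ) (Finset.Icc (-(N:ℕ):ℤ) (N:ℤ))) := by
        ext m; simp only [Finset.mem_Icc, Finset.mem_insert]; push_cast; omega
      rw [h1, Finset.sum_insert (by simp only [Finset.mem_Icc, Finset.mem_insert]; push_cast; omega),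
        Finset.sum_insert (by simp only [Finset.mem_Icc]; push_cast; omega), ih]
      push_cast
      have e1 : ((N:ℤ)+1)-1 = (N:ℤ) := by ring
      have e2 : -((N:ℤ)+1) = -(N:ℤ)-1 := by ring
      rw [e1, e2]
      ring

/-- The purely algebraic computation of the derivative of one term. -/
lemma key_algebra (μ : ℝ) (hμ : 0 < μ) (z z' w₁ w₂ : ℂ)
    (hz' : z' = Complex.I * ((1:ℝ) + (μ * ‖z‖ ^ 2 : ℝ)) * (w₁ + w₂)) :
    μ * ((z'.re * z.re + z.re * z'.re) + (z'.im * z.im + z.im * z'.im))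
      / (1 + μ * (z.re * z.re + z.im * z.im))
    = -(2*μ) * (((starRingEnd ℂ) z * w₁).im - ((starRingEnd ℂ) w₂ * z).im) := by
  have hpos : 0 < 1 + μ * (z.re * z.re + z.im * z.im) := by
    nlinarith [sq_nonneg z.re, sq_nonneg z.im]
  have hn : ‖z‖ ^ 2 = z.re * z.re + z.im * z.im := by
    rw [Complex.sq_norm, Complex.normSq_apply]
  rw [hz']
  simp only [Complex.mul_re, Complex.mul_im, Complex.add_re, Complex.add_im,
    Complex.I_re, Complex.I_im, Complex.ofReal_re, Complex.ofReal_im,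
    Complex.conj_re, Complex.conj_im, Complex.ofReal_add, Complex.ofReal_one,
    Complex.one_re, Complex.one_im, Complex.ofReal_mul, Complex.ofReal_pow, hn]
  field_simp
  ring

lemma norm_sq_summable (f : l2) : Summable (fun n : ℤ => ‖f n‖ ^ 2) := by
  have h := (lp.memℓp f).summable (by norm_num : (0:ℝ) < ENNReal.toReal 2)
  have he : (fun n : ℤ => ‖f n‖ ^ ENNReal.toReal 2) = fun n : ℤ => ‖f n‖ ^ 2 := by
    funext n
    rw [show ENNReal.toReal 2 = ((2:ℕ):ℝ) by norm_num, Real.rpow_natCast]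
  rwa [he] at h

/-- The deformed power `P_μ` is conserved along solutions of the AL lattice. -/
theorem AL_deformed_power_conserved (μ : ℝ) (hμ : 0 < μ) (ψ ψ' : ℝ → l2)
    (hψ : IsALSol μ (Ici 0) ψ ψ') :
    ∀ t : ℝ, 0 ≤ t → Pdef μ (ψ t) = Pdef μ (ψ 0) := by
  obtain ⟨hd, hc', heq⟩ := hψ
  set B : ℤ → ℝ → ℝ :=
    fun n s => ((starRingEnd ℂ) ((ψ s) n) * (ψ s) (n+1)).im with hBdef
  -- component derivatives and continuity
  have hdx : ∀ n : ℤ, ∀ s ∈ Ici (0:ℝ),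
      HasDerivWithinAt (fun u => (ψ u) n) ((ψ' s) n) (Ici 0) s :=
    fun n s hs => (evalCLM n).hasFDerivAt.comp_hasDerivWithinAt s (hd s hs)
  have hcx : ∀ n : ℤ, ContinuousOn (fun u => (ψ u) n) (Ici 0) :=
    fun n s hs => (hdx n s hs).continuousWithinAt
  have hcψ : ContinuousOn ψ (Ici 0) := fun s hs => (hd s hs).continuousWithinAt
  have hcB : ∀ n : ℤ, ContinuousOn (B n) (Ici 0) := by
    intro n
    exact Complex.continuous_im.comp_continuousOn
      ((Complex.continuous_conj.comp_continuousOn (hcx n)).mul (hcx (n+1)))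
  -- bound on B
  have hBle : ∀ n : ℤ, ∀ s : ℝ, |B n s| ≤ ‖ψ s‖ * ‖(ψ s) n‖ := by
    intro n s
    have h1 : |B n s| ≤ ‖(starRingEnd ℂ) ((ψ s) n) * (ψ s) (n+1)‖ :=
      Complex.abs_im_le_norm _
    have h2 : ‖(starRingEnd ℂ) ((ψ s) n) * (ψ s) (n+1)‖
        = ‖(ψ s) n‖ * ‖(ψ s) (n+1)‖ := by
      rw [norm_mul]
      simp
    have h3 : ‖(ψ s) (n+1)‖ ≤ ‖ψ s‖ := lp.norm_apply_le_norm (by norm_num) (ψ s) (n+1)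
    have h4 : (0:ℝ) ≤ ‖(ψ s) n‖ := norm_nonneg _
    calc |B n s| ≤ ‖(ψ s) n‖ * ‖(ψ s) (n+1)‖ := h2 ▸ h1
      _ ≤ ‖(ψ s) n‖ * ‖ψ s‖ := by gcongr
      _ = ‖ψ s‖ * ‖(ψ s) n‖ := mul_comm _ _
  -- derivative of each term
  have key : ∀ n : ℤ, ∀ s ∈ Ici (0:ℝ),
      HasDerivWithinAt (fun u => Real.log (1 + μ * ‖(ψ u) n‖ ^ 2))
        (-(2*μ) * (B n s - B (n-1) s)) (Ici 0) s := by
    intro n s hs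
    have hfun : (fun u => Real.log (1 + μ * ‖(ψ u) n‖ ^ 2))
        = fun u => Real.log (1 + μ * (((ψ u) n).re * ((ψ u) n).re
            + ((ψ u) n).im * ((ψ u) n).im)) := by
      funext u
      rw [Complex.sq_norm, Complex.normSq_apply]
    have ha : HasDerivWithinAt (fun u => ((ψ u) n).re) (((ψ' s) n).re) (Ici 0) s :=
      Complex.reCLM.hasFDerivAt.comp_hasDerivWithinAt s (hdx n s hs)
    have hb : HasDerivWithinAt (fun u => ((ψ u) n).im) (((ψ' s) n).im) (Ici 0) s :=
      Complex.imCLM.hasFDerivAt.comp_hasDerivWithinAt s (hdx n s hs)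
    have hq : HasDerivWithinAt
        (fun u => 1 + μ * (((ψ u) n).re * ((ψ u) n).re + ((ψ u) n).im * ((ψ u) n).im))
        (μ * ((((ψ' s) n).re * ((ψ s) n).re + ((ψ s) n).re * ((ψ' s) n).re)
          + (((ψ' s) n).im * ((ψ s) n).im + ((ψ s) n).im * ((ψ' s) n).im))) (Ici 0) s :=
      (((ha.mul ha).add (hb.mul hb)).const_mul μ).const_add 1
    have hpos : 0 < 1 + μ * (((ψ s) n).re * ((ψ s) n).re + ((ψ s) n).im * ((ψ s) n).im) := by
      nlinarith [sq_nonneg ((ψ s) n).re, sq_nonneg ((ψ s) n).im]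
    have hlog := hq.log (ne_of_gt hpos)
    rw [hfun]
    convert hlog using 1
    -- now the algebra
    have hEq := heq s hs n
    have hx' : (ψ' s) n
        = Complex.I * ((1:ℝ) + (μ * ‖(ψ s) n‖ ^ 2 : ℝ)) * ((ψ s) (n+1) + (ψ s) (n-1)) := by
      have h2 : Complex.I ^ 2 = -1 := Complex.I_sq
      push_cast at hEq ⊢
      linear_combination (-Complex.I) * hEq + (ψ' s) n * h2
    have halg := key_algebra μ hμ ((ψ s) n) ((ψ' s) n) ((ψ s) (n+1)) ((ψ s) (n-1)) hx'
    simp only [hBdef]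
    rw [show n - 1 + 1 = n from by ring]
    exact halg.symm
  -- summability of the terms
  have hsummable : ∀ u : ℝ, Summable (fun n : ℤ => Real.log (1 + μ * ‖(ψ u) n‖ ^ 2)) := by
    intro u
    have h2 : Summable (fun n : ℤ => μ * ‖(ψ u) n‖ ^ 2) := (norm_sq_summable (ψ u)).mul_left μ
    refine Summable.of_nonneg_of_le (fun n => Real.log_nonneg ?_) (fun n => ?_) h2
    · nlinarith [sq_nonneg ‖(ψ u) n‖, norm_nonneg ((ψ u) n)]
    · have hp : 0 < 1 + μ * ‖(ψ u) n‖ ^ 2 := by nlinarith [sq_nonneg ‖(ψ u) n‖]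
      have := Real.log_le_sub_one_of_pos hp
      linarith
  -- tendsto of partial sums over Icc (-N) N
  have hmono : Monotone (fun N : ℕ => Finset.Icc (-(N:ℤ)) (N:ℤ)) := by
    intro a b hab
    apply Finset.Icc_subset_Icc <;> [skip; exact_mod_cast hab]
    simp only [neg_le_neg_iff]
    exact_mod_cast hab
  have hexh : ∀ m : ℤ, ∃ N : ℕ, m ∈ Finset.Icc (-(N:ℤ)) (N:ℤ) := by
    intro m
    exact ⟨m.natAbs, by simp only [Finset.mem_Icc]; omega⟩
  have htendF : Filter.Tendsto (fun N : ℕ => Finset.Icc (-(N:ℤ)) (N:ℤ))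
      Filter.atTop Filter.atTop :=
    Filter.tendsto_atTop_finset_of_monotone hmono hexh
  have htend_sum : ∀ u : ℝ,
      Filter.Tendsto (fun N : ℕ => ∑ n ∈ Finset.Icc (-(N:ℤ)) (N:ℤ),
        Real.log (1 + μ * ‖(ψ u) n‖ ^ 2)) Filter.atTop (nhds (Pdef μ (ψ u))) :=
    fun u => (hsummable u).hasSum.comp htendF
  -- now fix t
  intro t ht
  -- FTC for each term
  have hFTC : ∀ n : ℤ, ∫ s in (0:ℝ)..t, (-(2*μ) * (B n s - B (n-1) s))
      = Real.log (1 + μ * ‖(ψ t) n‖ ^ 2) - Real.log (1 + μ * ‖(ψ 0) n‖ ^ 2) := by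
    intro n
    apply intervalIntegral.integral_eq_sub_of_hasDeriv_right_of_le ht
    · exact fun s hs => ((key n s hs.1).continuousWithinAt).mono Icc_subset_Ici_self
    · intro s hs
      exact (key n s hs.1.le).mono fun y hy => (hs.1.trans hy).le
    · apply ContinuousOn.intervalIntegrable
      rw [uIcc_of_le ht]
      exact (continuousOn_const.mul (((hcB n).sub (hcB (n-1))).mono Icc_subset_Ici_self))
  -- integrability helper
  have hint : ∀ n : ℤ, IntervalIntegrable (fun s => -(2*μ) * (B n s - B (n-1) s))
      MeasureTheory.volume 0 t := by
    intro n
    apply ContinuousOn.intervalIntegrable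
    rw [uIcc_of_le ht]
    exact continuousOn_const.mul (((hcB n).sub (hcB (n-1))).mono Icc_subset_Ici_self)
  -- partial sums identity
  have hsumN : ∀ N : ℕ,
      (∑ n ∈ Finset.Icc (-(N:ℤ)) (N:ℤ), Real.log (1 + μ * ‖(ψ t) n‖ ^ 2))
        - (∑ n ∈ Finset.Icc (-(N:ℤ)) (N:ℤ), Real.log (1 + μ * ‖(ψ 0) n‖ ^ 2))
      = ∫ s in (0:ℝ)..t, -(2*μ) * (B (N:ℤ) s - B (-(N:ℤ)-1) s) := by
    intro N
    rw [← Finset.sum_sub_distrib]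
    have h1 : ∀ n ∈ Finset.Icc (-(N:ℤ)) (N:ℤ),
        Real.log (1 + μ * ‖(ψ t) n‖ ^ 2) - Real.log (1 + μ * ‖(ψ 0) n‖ ^ 2)
        = ∫ s in (0:ℝ)..t, (-(2*μ) * (B n s - B (n-1) s)) :=
      fun n _ => (hFTC n).symm
    rw [Finset.sum_congr rfl h1, ← intervalIntegral.integral_finset_sum (fun n _ => hint n)]
    apply intervalIntegral.integral_congr
    intro s _
    simp only
    rw [← Finset.mul_sum, telescope_sum (fun n => B n s) N]
  -- the integral tends to 0
  have hcomp_pos : Filter.Tendsto (fun N : ℕ => ((N:ℤ))) Filter.atTop Filter.cofinite := by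
    rw [← Nat.cofinite_eq_atTop]
    exact Nat.cast_injective.tendsto_cofinite
  have hcomp_neg : Filter.Tendsto (fun N : ℕ => (-(N:ℤ)-1)) Filter.atTop Filter.cofinite := by
    rw [← Nat.cofinite_eq_atTop]
    apply Function.Injective.tendsto_cofinite
    intro a b hab
    simpa using hab
  have hx0 : ∀ s : ℝ, Filter.Tendsto (fun n : ℤ => (ψ s) n) Filter.cofinite (nhds 0) := by
    intro s
    rw [tendsto_zero_iff_norm_tendsto_zero]
    have h1 : Filter.Tendsto (fun n : ℤ => ‖(ψ s) n‖ ^ 2) Filter.cofinite (nhds 0) :=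
      (norm_sq_summable (ψ s)).tendsto_cofinite_zero
    have h2 := (Real.continuous_sqrt.tendsto 0).comp h1
    simp only [Real.sqrt_zero] at h2
    convert h2 using 2 with n
    simp [Function.comp, Real.sqrt_sq (norm_nonneg _)]
  have hBtend : ∀ s : ℝ, ∀ (e : ℕ → ℤ),
      Filter.Tendsto e Filter.atTop Filter.cofinite →
      Filter.Tendsto (fun N : ℕ => B (e N) s) Filter.atTop (nhds 0) := by
    intro s e he
    apply squeeze_zero_norm (a := fun N => ‖ψ s‖ * ‖(ψ s) (e N)‖)
    · intro N
      rw [Real.norm_eq_abs]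
      exact hBle (e N) s
    · have h1 : Filter.Tendsto (fun N : ℕ => ‖(ψ s) (e N)‖) Filter.atTop (nhds 0) := by
        have := ((hx0 s).comp he).norm
        simpa using this
      have := h1.const_mul ‖ψ s‖
      simpa using this
  have htend_int : Filter.Tendsto
      (fun N : ℕ => ∫ s in (0:ℝ)..t, -(2*μ) * (B (N:ℤ) s - B (-(N:ℤ)-1) s))
      Filter.atTop (nhds 0) := by
    suffices hDCT : Filter.Tendsto
        (fun N : ℕ => ∫ s in (0:ℝ)..t, -(2*μ) * (B (N:ℤ) s - B (-(N:ℤ)-1) s))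
        Filter.atTop (nhds (∫ s in (0:ℝ)..t, (0:ℝ))) by simpa using hDCT
    apply intervalIntegral.tendsto_integral_filter_of_dominated_convergence
      (bound := fun s => 2*μ*(‖ψ s‖ * ‖ψ s‖ + ‖ψ s‖ * ‖ψ s‖))
    · apply Filter.Eventually.of_forall
      intro N
      apply ContinuousOn.aestronglyMeasurable (s := uIoc (0:ℝ) t) ?_ measurableSet_uIoc
      have hsub : uIoc (0:ℝ) t ⊆ Ici 0 := by
        rw [uIoc_of_le ht]
        exact Ioc_subset_Icc_self.trans Icc_subset_Ici_self
      exact continuousOn_const.mul (((hcB _).sub (hcB _)).mono hsub)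
    · apply Filter.Eventually.of_forall
      intro N
      apply MeasureTheory.ae_of_all
      intro s hs
      have hs0 : (0:ℝ) ≤ s := by
        rw [uIoc_of_le ht] at hs
        exact hs.1.le
      have b1 := hBle (N:ℤ) s
      have b2 := hBle (-(N:ℤ)-1) s
      have hb1 : ‖(ψ s) (N:ℤ)‖ ≤ ‖ψ s‖ := lp.norm_apply_le_norm (by norm_num) (ψ s) _
      have hb2 : ‖(ψ s) (-(N:ℤ)-1)‖ ≤ ‖ψ s‖ := lp.norm_apply_le_norm (by norm_num) (ψ s) _
      have hnn : (0:ℝ) ≤ ‖ψ s‖ := norm_nonneg _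
      rw [Real.norm_eq_abs, abs_mul]
      have : |B (N:ℤ) s - B (-(N:ℤ)-1) s| ≤ ‖ψ s‖ * ‖ψ s‖ + ‖ψ s‖ * ‖ψ s‖ := by
        have := abs_sub (B (N:ℤ) s) (B (-(N:ℤ)-1) s)
        nlinarith [abs_sub_abs_le_abs_sub (B (N:ℤ) s) (B (-(N:ℤ)-1) s),
          abs_sub (B (N:ℤ) s) (B (-(N:ℤ)-1) s)]
      calc |(-(2*μ))| * |B (N:ℤ) s - B (-(N:ℤ)-1) s|
          = 2*μ * |B (N:ℤ) s - B (-(N:ℤ)-1) s| := by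
            rw [abs_neg, abs_of_pos (by linarith)]
        _ ≤ 2*μ*(‖ψ s‖ * ‖ψ s‖ + ‖ψ s‖ * ‖ψ s‖) := by nlinarith
    · apply ContinuousOn.intervalIntegrable
      rw [uIcc_of_le ht]
      have hcn : ContinuousOn (fun s => ‖ψ s‖) (Icc 0 t) :=
        (hcψ.mono Icc_subset_Ici_self).norm
      exact continuousOn_const.mul ((hcn.mul hcn).add (hcn.mul hcn))
    · apply MeasureTheory.ae_of_all
      intro s hs
      have h1 := hBtend s _ hcomp_pos
      have h2 := hBtend s _ hcomp_neg
      have := ((h1.sub h2).const_mul (-(2*μ)))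
      simpa using this
  -- conclude
  have h1 : Filter.Tendsto (fun N : ℕ =>
      (∑ n ∈ Finset.Icc (-(N:ℤ)) (N:ℤ), Real.log (1 + μ * ‖(ψ t) n‖ ^ 2))
        - (∑ n ∈ Finset.Icc (-(N:ℤ)) (N:ℤ), Real.log (1 + μ * ‖(ψ 0) n‖ ^ 2)))
      Filter.atTop (nhds (Pdef μ (ψ t) - Pdef μ (ψ 0))) :=
    (htend_sum t).sub (htend_sum 0)
  have h2 : Filter.Tendsto (fun N : ℕ =>
      (∑ n ∈ Finset.Icc (-(N:ℤ)) (N:ℤ), Real.log (1 + μ * ‖(ψ t) n‖ ^ 2))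
        - (∑ n ∈ Finset.Icc (-(N:ℤ)) (N:ℤ), Real.log (1 + μ * ‖(ψ 0) n‖ ^ 2)))
      Filter.atTop (nhds 0) := by
    have : (fun N : ℕ =>
        (∑ n ∈ Finset.Icc (-(N:ℤ)) (N:ℤ), Real.log (1 + μ * ‖(ψ t) n‖ ^ 2))
          - (∑ n ∈ Finset.Icc (-(N:ℤ)) (N:ℤ), Real.log (1 + μ * ‖(ψ 0) n‖ ^ 2)))
        = fun N : ℕ => ∫ s in (0:ℝ)..t, -(2*μ) * (B (N:ℤ) s - B (-(N:ℤ)-1) s) :=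
      funext hsumN
    rw [this]
    exact htend_int
  have h3 : Pdef μ (ψ t) - Pdef μ (ψ 0) = 0 := tendsto_nhds_unique h1 h2
  linarith
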